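/- For every integer k ≥ 2, there exists a uniquely k-dimensional finite connected simple graph of order ⌈5k/2⌉ + 1. -/

import Mathlib

set_option linter.unusedSectionVars false
set_option maxRecDepth 10000
set_option maxHeartbeats 2000000


open SimpleGraph

/-- `W` is a resolving set for `G`: any two distinct vertices are distinguished
by their distance to some vertex of `W`. -/
def IsResolvingSet {V : Type*} (G : SimpleGraph V) (W : Finset V) : Prop :=
  ∀ u v : V, u ≠ v → ∃ w ∈ W, G.dist u w ≠ G.dist v w

/-- The metric dimension of `G`: the minimum cardinality of a resolving set. -/
noncomputable def metricDim {V : Type*} (G : SimpleGraph V) : ℕ :=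
  sInf {k | ∃ W : Finset V, IsResolvingSet G W ∧ W.card = k}

/-- `B` is a metric basis: a resolving set of minimum cardinality. -/
def IsMetricBasis {V : Type*} (G : SimpleGraph V) (B : Finset V) : Prop :=
  IsResolvingSet G B ∧ B.card = metricDim G

/-- `G` is uniquely dimensional: it has exactly one metric basis. -/
def UniquelyDimensional {V : Type*} (G : SimpleGraph V) : Prop :=
  ∃! B : Finset V, IsMetricBasis G B

/-- `G` is uniquely `k`-dimensional: a unique metric basis and metric dimension `k`. -/
def UniquelyKDimensional {V : Type*} (G : SimpleGraph V) (k : ℕ) : Prop :=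
  UniquelyDimensional G ∧ metricDim G = k

namespace Stmt16

/-! ### Gadgets (facts stubbed for now) -/

def adj5 (a b : Fin 5) : Bool :=
  let l : List (Fin 5 × Fin 5) := [(0,1),(0,2),(0,4),(1,2),(1,3)]
  (a,b) ∈ l || (b,a) ∈ l

def adj8 (a b : Fin 8) : Bool :=
  let l : List (Fin 8 × Fin 8) :=
    [(0,4),(0,5),(0,6),(1,2),(1,4),(1,5),(1,6),(1,7),(2,3),(2,4),(2,5),(2,7),(3,7),(4,5),(4,6),(4,7)]
  (a,b) ∈ l || (b,a) ∈ l

def lsig5 (a b : Fin 5) : ℕ := if a = b then 0 else if adj5 a b then 1 else 2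
def lsig8 (a b : Fin 8) : ℕ := if a = b then 0 else if adj8 a b then 1 else 2

def Loc5 (T : Finset (Fin 5)) : Prop := ∀ a b : Fin 5, a ≠ b → ∃ s ∈ T, lsig5 a s ≠ lsig5 b s
def Star5 (T : Finset (Fin 5)) : Prop := ∀ a : Fin 5, ∃ s ∈ T, lsig5 a s ≠ 1
def Loc8 (T : Finset (Fin 8)) : Prop := ∀ a b : Fin 8, a ≠ b → ∃ s ∈ T, lsig8 a s ≠ lsig8 b s
def Star8 (T : Finset (Fin 8)) : Prop := ∀ a : Fin 8, ∃ s ∈ T, lsig8 a s ≠ 1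

instance : DecidablePred Loc5 := fun _ => by unfold Loc5; infer_instance
instance : DecidablePred Star5 := fun _ => by unfold Star5; infer_instance
instance : DecidablePred Loc8 := fun _ => by unfold Loc8; infer_instance
instance : DecidablePred Star8 := fun _ => by unfold Star8; infer_instance

def S5 : Finset (Fin 5) := {3, 4}
def S8 : Finset (Fin 8) := {0, 3, 5}

lemma adj5_symm : ∀ a b, adj5 a b = adj5 b a := by decide
lemma adj8_symm : ∀ a b, adj8 a b = adj8 b a := by decide
lemma fact5a : Loc5 S5 ∧ Star5 S5 := by decide
lemma fact5b : ∀ T : Finset (Fin 5), Loc5 T → 2 ≤ T.card := by decide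
lemma fact5c : ∀ T : Finset (Fin 5), T.card = 2 → Loc5 T → Star5 T → T = S5 := by decide
lemma fact8a : Loc8 S8 ∧ Star8 S8 := by decide
lemma fact8b : ∀ T : Finset (Fin 8), Loc8 T → 3 ≤ T.card := by decide
lemma fact8c : ∀ T : Finset (Fin 8), T.card = 3 → Loc8 T → Star8 T → T = S8 := by decide
lemma card_S5 : S5.card = 2 := by decide
lemma card_S8 : S8.card = 3 := by decide

/-! ### Cone -/

variable {V₀ : Type*} [DecidableEq V₀] {ι : Type*} [DecidableEq ι]

/-- local signature -/
def lsig (A : V₀ → V₀ → Bool) (a b : V₀) : ℕ :=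
  if a = b then 0 else if A a b then 1 else 2

variable (g : V₀ → ι) (A : V₀ → V₀ → Bool)

/-- the join of the gadget graphs together with one universal vertex `none`. -/
def coneJoin (hA : ∀ a b, A a b = A b a) : SimpleGraph (Option V₀) where
  Adj u v := match u, v with
    | none, none => False
    | none, some _ => True
    | some _, none => True
    | some a, some b => a ≠ b ∧ (g a ≠ g b ∨ A a b = true)
  symm := by
    constructor
    rintro (_|a) (_|b) h
    · exact h.elim
    · trivial
    · trivial
    · exact ⟨h.1.symm, h.2.imp Ne.symm (fun h2 => by rw [← hA a b]; exact h2)⟩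
  loopless := by constructor; rintro (_|a) h <;> simp_all

variable (hA : ∀ a b, A a b = A b a)

lemma coneJoin_adj_none_some (a : V₀) : (coneJoin g A hA).Adj none (some a) := trivial

lemma coneJoin_connected : (coneJoin g A hA).Connected := by
  have key : ∀ v : Option V₀, (coneJoin g A hA).Reachable none v := by
    rintro (_|a)
    · exact Reachable.refl _
    · exact (coneJoin_adj_none_some g A hA a).reachable
  constructor
  intro u v
  exact (key u).symm.trans (key v)

lemma dist_none_some (a : V₀) : (coneJoin g A hA).dist none (some a) = 1 :=
  dist_eq_one_iff_adj.mpr (coneJoin_adj_none_some g A hA a)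

lemma dist_some_none (a : V₀) : (coneJoin g A hA).dist (some a) none = 1 := by
  rw [dist_comm]; exact dist_none_some g A hA a

lemma dist_some_same {a s : V₀} (h : g a = g s) :
    (coneJoin g A hA).dist (some a) (some s) = lsig A a s := by
  unfold lsig
  by_cases heq : a = s
  · simp [heq]
  · by_cases hadj : A a s = true
    · rw [if_neg heq, if_pos hadj]
      exact dist_eq_one_iff_adj.mpr ⟨by simpa using heq, Or.inr hadj⟩
    · rw [if_neg heq, if_neg hadj]
      have hnadj : ¬ (coneJoin g A hA).Adj (some a) (some s) := by
        rintro ⟨-, h2 | h2⟩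
        · exact h2 h
        · exact hadj h2
      have hle := SimpleGraph.dist_le
        (Walk.cons ((coneJoin_adj_none_some g A hA a).symm)
          (Walk.cons (coneJoin_adj_none_some g A hA s) Walk.nil))
      simp only [Walk.length_cons, Walk.length_nil] at hle
      have h0 : ¬ (coneJoin g A hA).dist (some a) (some s) = 0 := by
        intro hzero
        have := ((coneJoin_connected g A hA).dist_eq_zero_iff).mp hzero
        simp only [Option.some.injEq] at this
        exact heq this
      have h1 : ¬ (coneJoin g A hA).dist (some a) (some s) = 1 := by
        intro h1
        exact hnadj (dist_eq_one_iff_adj.mp h1)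
      omega

lemma dist_some_diff {a s : V₀} (h : g a ≠ g s) :
    (coneJoin g A hA).dist (some a) (some s) = 1 := by
  refine dist_eq_one_iff_adj.mpr ⟨?_, Or.inl h⟩
  simp only [ne_eq, Option.some.injEq]
  rintro rfl; exact h rfl

/-- upper bound direction: a fiberwise locating + star set is resolving. -/
lemma resolving_of (S : Finset V₀)
    (H1 : ∀ a b, g a = g b → a ≠ b → ∃ s ∈ S, g s = g a ∧ lsig A a s ≠ lsig A b s)
    (H2 : ∀ a, ∃ s ∈ S, g s = g a ∧ lsig A a s ≠ 1) :
    IsResolvingSet (coneJoin g A hA) (S.map ⟨some, Option.some_injective _⟩) := by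
  have memmap : ∀ s ∈ S, some s ∈ S.map ⟨some, Option.some_injective V₀⟩ := by
    intro s hs; exact Finset.mem_map_of_mem _ hs
  rintro (_|a) (_|b) huv
  · exact absurd rfl huv
  · obtain ⟨s, hs, hgs, hsig⟩ := H2 b
    refine ⟨some s, memmap s hs, ?_⟩
    rw [dist_none_some,
      (dist_some_same g A hA (hgs.symm : g b = g s) :
        (coneJoin g A hA).dist (some b) (some s) = lsig A b s)]
    exact fun h => hsig h.symm
  · obtain ⟨s, hs, hgs, hsig⟩ := H2 a
    refine ⟨some s, memmap s hs, ?_⟩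
    rw [dist_none_some,
      (dist_some_same g A hA (hgs.symm : g a = g s) :
        (coneJoin g A hA).dist (some a) (some s) = lsig A a s)]
    exact fun h => hsig h
  · by_cases hg : g a = g b
    · obtain ⟨s, hs, hgs, hsig⟩ := H1 a b hg (by simpa using huv)
      refine ⟨some s, memmap s hs, ?_⟩
      rw [(dist_some_same g A hA (hgs.symm : g a = g s) :
            (coneJoin g A hA).dist (some a) (some s) = lsig A a s),
          (dist_some_same g A hA ((hg ▸ hgs).symm : g b = g s) :
            (coneJoin g A hA).dist (some b) (some s) = lsig A b s)]
      exact hsig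
    · obtain ⟨s, hs, hgs, hsig⟩ := H2 a
      refine ⟨some s, memmap s hs, ?_⟩
      rw [(dist_some_same g A hA (hgs.symm : g a = g s) :
            (coneJoin g A hA).dist (some a) (some s) = lsig A a s),
          (dist_some_diff g A hA (by rw [hgs]; exact fun hh => hg hh.symm : g b ≠ g s) :
            (coneJoin g A hA).dist (some b) (some s) = 1)]
      exact hsig

/-- lower bound direction 1: fibers of a resolving set are locating. -/
lemma loc_of_resolving (W : Finset (Option V₀)) (hW : IsResolvingSet (coneJoin g A hA) W) :
    ∀ a b, g a = g b → a ≠ b →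
      ∃ s : V₀, some s ∈ W ∧ g s = g a ∧ lsig A a s ≠ lsig A b s := by
  intro a b hg hab
  obtain ⟨w, hwW, hw⟩ := hW (some a) (some b) (by simpa using hab)
  match w with
  | none =>
    rw [dist_some_none, dist_some_none] at hw
    exact absurd rfl hw
  | some s =>
    by_cases hgs : g s = g a
    · refine ⟨s, hwW, hgs, ?_⟩
      rwa [(dist_some_same g A hA (hgs.symm : g a = g s) :
            (coneJoin g A hA).dist (some a) (some s) = lsig A a s),
          (dist_some_same g A hA ((hg ▸ hgs).symm : g b = g s) :
            (coneJoin g A hA).dist (some b) (some s) = lsig A b s)] at hw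
    · rw [(dist_some_diff g A hA (fun h => hgs h.symm : g a ≠ g s) :
            (coneJoin g A hA).dist (some a) (some s) = 1),
          (dist_some_diff g A hA (fun h => hgs (hg ▸ h.symm) : g b ≠ g s) :
            (coneJoin g A hA).dist (some b) (some s) = 1)] at hw
      exact absurd rfl hw

/-- lower bound direction 2: if the universal vertex is not in the resolving set,
fibers satisfy the star condition. -/
lemma star_of_resolving (W : Finset (Option V₀)) (hW : IsResolvingSet (coneJoin g A hA) W)
    (hnone : none ∉ W) :
    ∀ a, ∃ s : V₀, some s ∈ W ∧ g s = g a ∧ lsig A a s ≠ 1 := by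
  intro a
  obtain ⟨w, hwW, hw⟩ := hW none (some a) (by simp)
  match w with
  | none => exact absurd hwW hnone
  | some s =>
    rw [dist_none_some] at hw
    by_cases hgs : g s = g a
    · refine ⟨s, hwW, hgs, ?_⟩
      rw [(dist_some_same g A hA (hgs.symm : g a = g s) :
            (coneJoin g A hA).dist (some a) (some s) = lsig A a s)] at hw
      exact fun h => hw h.symm
    · rw [(dist_some_diff g A hA (fun h => hgs h.symm : g a ≠ g s) :
            (coneJoin g A hA).dist (some a) (some s) = 1)] at hw
      exact absurd rfl hw


/-! ### Instantiation -/

abbrev V0 (m e : ℕ) := (Fin m × Fin 5) ⊕ (Fin e × Fin 8)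

variable (m e : ℕ)

def gg : V0 m e → (Fin m ⊕ Fin e) := Sum.map Prod.fst Prod.fst

def AA : V0 m e → V0 m e → Bool
  | .inl p, .inl q => adj5 p.2 q.2
  | .inr p, .inr q => adj8 p.2 q.2
  | _, _ => false

lemma AA_symm : ∀ a b, AA m e a b = AA m e b a := by
  rintro (p|p) (q|q) <;> simp [AA, adj5_symm, adj8_symm]

def G0 : SimpleGraph (Option (V0 m e)) := coneJoin (gg m e) (AA m e) (AA_symm m e)

lemma lsig_inl (i : Fin m) (x z : Fin 5) :
    lsig (AA m e) (Sum.inl (i, x)) (Sum.inl (i, z)) = lsig5 x z := by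
  by_cases h : x = z <;> simp [lsig, lsig5, AA, h] <;> congr

lemma lsig_inr (j : Fin e) (y z : Fin 8) :
    lsig (AA m e) (Sum.inr (j, y)) (Sum.inr (j, z)) = lsig8 y z := by
  by_cases h : y = z <;> simp [lsig, lsig8, AA, h] <;> congr

def S0 : Finset (V0 m e) :=
  ((Finset.univ ×ˢ S5).image Sum.inl) ∪ ((Finset.univ ×ˢ S8).image Sum.inr)

lemma mem_S0_inl (i : Fin m) (x : Fin 5) : Sum.inl (i, x) ∈ S0 m e ↔ x ∈ S5 := by
  simp [S0]

lemma mem_S0_inr (j : Fin e) (y : Fin 8) : Sum.inr (j, y) ∈ S0 m e ↔ y ∈ S8 := by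
  simp [S0]

lemma card_S0 : (S0 m e).card = 2 * m + 3 * e := by
  rw [S0, Finset.card_union_of_disjoint, Finset.card_image_of_injective _ Sum.inl_injective,
    Finset.card_image_of_injective _ Sum.inr_injective, Finset.card_product,
    Finset.card_product, Finset.card_univ, Finset.card_univ, Fintype.card_fin, Fintype.card_fin,
    card_S5, card_S8]
  · ring
  · simp [Finset.disjoint_left]

lemma H1 : ∀ a b : V0 m e, gg m e a = gg m e b → a ≠ b →
    ∃ s ∈ S0 m e, gg m e s = gg m e a ∧ lsig (AA m e) a s ≠ lsig (AA m e) b s := by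
  rintro (⟨i, x⟩|⟨j, y⟩) (⟨i', x'⟩|⟨j', y'⟩) hg hne
  · obtain rfl : i = i' := by simpa [gg] using hg
    have hxx : x ≠ x' := fun h => hne (by rw [h])
    obtain ⟨z, hz, hsig⟩ := fact5a.1 x x' hxx
    exact ⟨Sum.inl (i, z), (mem_S0_inl m e i z).mpr hz, by simp [gg],
      by rw [lsig_inl, lsig_inl]; exact hsig⟩
  · simp [gg] at hg
  · simp [gg] at hg
  · obtain rfl : j = j' := by simpa [gg] using hg
    have hyy : y ≠ y' := fun h => hne (by rw [h])
    obtain ⟨z, hz, hsig⟩ := fact8a.1 y y' hyy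
    exact ⟨Sum.inr (j, z), (mem_S0_inr m e j z).mpr hz, by simp [gg],
      by rw [lsig_inr, lsig_inr]; exact hsig⟩

lemma H2 : ∀ a : V0 m e, ∃ s ∈ S0 m e, gg m e s = gg m e a ∧ lsig (AA m e) a s ≠ 1 := by
  rintro (⟨i, x⟩|⟨j, y⟩)
  · obtain ⟨z, hz, hsig⟩ := fact5a.2 x
    exact ⟨Sum.inl (i, z), (mem_S0_inl m e i z).mpr hz, by simp [gg],
      by rw [lsig_inl]; exact hsig⟩
  · obtain ⟨z, hz, hsig⟩ := fact8a.2 y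
    exact ⟨Sum.inr (j, z), (mem_S0_inr m e j z).mpr hz, by simp [gg],
      by rw [lsig_inr]; exact hsig⟩

def B0 : Finset (Option (V0 m e)) := (S0 m e).map ⟨some, Option.some_injective _⟩

lemma card_B0 : (B0 m e).card = 2 * m + 3 * e := by
  rw [B0, Finset.card_map, card_S0]

lemma B0_resolving : IsResolvingSet (G0 m e) (B0 m e) :=
  resolving_of (gg m e) (AA m e) (AA_symm m e) (S0 m e) (H1 m e) (H2 m e)

/-! fibers of a resolving set -/

def W5 (W : Finset (Option (V0 m e))) (i : Fin m) : Finset (Fin 5) :=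
  Finset.univ.filter (fun x => some (Sum.inl (i, x)) ∈ W)

def W8 (W : Finset (Option (V0 m e))) (j : Fin e) : Finset (Fin 8) :=
  Finset.univ.filter (fun y => some (Sum.inr (j, y)) ∈ W)

variable {m e} (W : Finset (Option (V0 m e)))

lemma loc_W5 (hW : IsResolvingSet (G0 m e) W) (i : Fin m) : Loc5 (W5 m e W i) := by
  intro x y hxy
  obtain ⟨s, hsW, hgs, hsig⟩ := loc_of_resolving (gg m e) (AA m e) (AA_symm m e) W hW
    (Sum.inl (i, x)) (Sum.inl (i, y)) rfl (by simp [hxy])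
  obtain ⟨i', z⟩ | ⟨j', z⟩ := s
  · obtain rfl : i' = i := by simpa [gg] using hgs
    refine ⟨z, by simp [W5, hsW], ?_⟩
    rwa [lsig_inl, lsig_inl] at hsig
  · simp [gg] at hgs

lemma loc_W8 (hW : IsResolvingSet (G0 m e) W) (j : Fin e) : Loc8 (W8 m e W j) := by
  intro x y hxy
  obtain ⟨s, hsW, hgs, hsig⟩ := loc_of_resolving (gg m e) (AA m e) (AA_symm m e) W hW
    (Sum.inr (j, x)) (Sum.inr (j, y)) rfl (by simp [hxy])
  obtain ⟨i', z⟩ | ⟨j', z⟩ := s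
  · simp [gg] at hgs
  · obtain rfl : j' = j := by simpa [gg] using hgs
    refine ⟨z, by simp [W8, hsW], ?_⟩
    rwa [lsig_inr, lsig_inr] at hsig

lemma star_W5 (hW : IsResolvingSet (G0 m e) W) (hnone : none ∉ W) (i : Fin m) :
    Star5 (W5 m e W i) := by
  intro x
  obtain ⟨s, hsW, hgs, hsig⟩ := star_of_resolving (gg m e) (AA m e) (AA_symm m e) W hW hnone
    (Sum.inl (i, x))
  obtain ⟨i', z⟩ | ⟨j', z⟩ := s
  · obtain rfl : i' = i := by simpa [gg] using hgs
    refine ⟨z, by simp [W5, hsW], ?_⟩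
    rwa [lsig_inl] at hsig
  · simp [gg] at hgs

lemma star_W8 (hW : IsResolvingSet (G0 m e) W) (hnone : none ∉ W) (j : Fin e) :
    Star8 (W8 m e W j) := by
  intro y
  obtain ⟨s, hsW, hgs, hsig⟩ := star_of_resolving (gg m e) (AA m e) (AA_symm m e) W hW hnone
    (Sum.inr (j, y))
  obtain ⟨i', z⟩ | ⟨j', z⟩ := s
  · simp [gg] at hgs
  · obtain rfl : j' = j := by simpa [gg] using hgs
    refine ⟨z, by simp [W8, hsW], ?_⟩
    rwa [lsig_inr] at hsig

/-! counting -/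

def cls : Option (V0 m e) → Option (Fin m ⊕ Fin e) := Option.map (gg m e)

lemma card_fiberwise :
    W.card = (W.filter (fun u => cls u = none)).card
      + (∑ i : Fin m, (W5 m e W i).card) + (∑ j : Fin e, (W8 m e W j).card) := by
  have h := Finset.card_eq_sum_card_fiberwise
    (f := cls (m := m) (e := e)) (s := W) (t := Finset.univ) (fun x _ => Finset.mem_univ _)
  have e5 : ∀ i : Fin m,
      (W.filter (fun u => cls u = some (Sum.inl i))).card = (W5 m e W i).card := by
    intro i
    rw [show W.filter (fun u => cls u = some (Sum.inl i))
        = (W5 m e W i).image (fun x => some (Sum.inl (i, x))) from ?_]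
    · rw [Finset.card_image_of_injective]
      intro a b hab
      simpa using hab
    · ext u
      obtain _ | (⟨i', x⟩ | ⟨j', y⟩) := u <;>
        simp [cls, gg, W5, Prod.ext_iff, and_comm, eq_comm]
      · aesop
  have e8 : ∀ j : Fin e,
      (W.filter (fun u => cls u = some (Sum.inr j))).card = (W8 m e W j).card := by
    intro j
    rw [show W.filter (fun u => cls u = some (Sum.inr j))
        = (W8 m e W j).image (fun y => some (Sum.inr (j, y))) from ?_]
    · rw [Finset.card_image_of_injective]
      intro a b hab
      simpa using hab
    · ext u
      obtain _ | (⟨i', x⟩ | ⟨j', y⟩) := u <;>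
        simp [cls, gg, W8, Prod.ext_iff, and_comm, eq_comm]
      · aesop
  rw [h, Fintype.sum_option, Fintype.sum_sum_type]
  simp only [e5, e8]
  omega

lemma card_lower (hW : IsResolvingSet (G0 m e) W) : 2 * m + 3 * e ≤ W.card := by
  have h5 : ∀ i : Fin m, 2 ≤ (W5 m e W i).card := fun i => fact5b _ (loc_W5 W hW i)
  have h8 : ∀ j : Fin e, 3 ≤ (W8 m e W j).card := fun j => fact8b _ (loc_W8 W hW j)
  have s5 : 2 * m ≤ ∑ i : Fin m, (W5 m e W i).card := by
    calc 2 * m = ∑ _i : Fin m, 2 := by simp [mul_comm]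
    _ ≤ _ := Finset.sum_le_sum (fun i _ => h5 i)
  have s8 : 3 * e ≤ ∑ j : Fin e, (W8 m e W j).card := by
    calc 3 * e = ∑ _j : Fin e, 3 := by simp [mul_comm]
    _ ≤ _ := Finset.sum_le_sum (fun j _ => h8 j)
  have := card_fiberwise W
  omega


lemma force_eq {n c : ℕ} (f : Fin n → ℕ) (h : ∀ i, c ≤ f i)
    (hsum : ∑ i, f i ≤ ∑ _i : Fin n, c) : ∀ i, f i = c := by
  have h1 : ∑ i : Fin n, f i = ∑ i : Fin n, ((f i - c) + c) :=
    Finset.sum_congr rfl (fun i _ => by have := h i; omega)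
  rw [Finset.sum_add_distrib] at h1
  have h2 : ∑ i : Fin n, (f i - c) = 0 := by omega
  intro i
  have h3 := (Finset.sum_eq_zero_iff.mp h2) i (Finset.mem_univ i)
  have := h i
  omega

lemma basis_forced (hW : IsResolvingSet (G0 m e) W) (hcard : W.card = 2 * m + 3 * e) :
    W = B0 m e := by
  have hfib := card_fiberwise W
  have h5 : ∀ i : Fin m, 2 ≤ (W5 m e W i).card := fun i => fact5b _ (loc_W5 W hW i)
  have h8 : ∀ j : Fin e, 3 ≤ (W8 m e W j).card := fun j => fact8b _ (loc_W8 W hW j)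
  have s5 : ∑ _i : Fin m, 2 ≤ ∑ i : Fin m, (W5 m e W i).card :=
    Finset.sum_le_sum (fun i _ => h5 i)
  have s8 : ∑ _j : Fin e, 3 ≤ ∑ j : Fin e, (W8 m e W j).card :=
    Finset.sum_le_sum (fun j _ => h8 j)
  have c5 : ∑ _i : Fin m, 2 = 2 * m := by simp [mul_comm]
  have c8 : ∑ _j : Fin e, 3 = 3 * e := by simp [mul_comm]
  have hnone : none ∉ W := by
    intro hn
    have h1 : 0 < (W.filter (fun u => cls u = none)).card :=
      Finset.card_pos.mpr ⟨none, by simp [cls, hn]⟩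
    omega
  have hc0 : (W.filter (fun u => cls u = none)).card = 0 := by
    rw [Finset.card_eq_zero]
    ext u
    simp only [Finset.mem_filter, Finset.notMem_empty, iff_false]
    rintro ⟨huW, hcls⟩
    obtain _ | v := u
    · exact hnone huW
    · simp [cls] at hcls
  have f5 : ∀ i : Fin m, (W5 m e W i).card = 2 := by
    apply force_eq _ h5
    omega
  have f8 : ∀ j : Fin e, (W8 m e W j).card = 3 := by
    apply force_eq _ h8
    omega
  have e5 : ∀ i : Fin m, W5 m e W i = S5 :=
    fun i => fact5c _ (f5 i) (loc_W5 W hW i) (star_W5 W hW hnone i)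
  have e8 : ∀ j : Fin e, W8 m e W j = S8 :=
    fun j => fact8c _ (f8 j) (loc_W8 W hW j) (star_W8 W hW hnone j)
  ext u
  obtain _ | (⟨i, x⟩ | ⟨j, y⟩) := u
  · refine iff_of_false hnone ?_
    simp [B0]
  · have hw : some (Sum.inl (i, x)) ∈ W ↔ x ∈ W5 m e W i := by simp [W5]
    have hb : some (Sum.inl (i, x)) ∈ B0 m e ↔ x ∈ S5 := by
      rw [B0]
      simp only [Finset.mem_map, Function.Embedding.coeFn_mk, Option.some.injEq]
      constructor
      · rintro ⟨a, ha, rfl⟩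
        rwa [← mem_S0_inl m e i x]
      · intro hx
        exact ⟨Sum.inl (i, x), (mem_S0_inl m e i x).mpr hx, rfl⟩
    rw [hw, hb, e5 i]
  · have hw : some (Sum.inr (j, y)) ∈ W ↔ y ∈ W8 m e W j := by simp [W8]
    have hb : some (Sum.inr (j, y)) ∈ B0 m e ↔ y ∈ S8 := by
      rw [B0]
      simp only [Finset.mem_map, Function.Embedding.coeFn_mk, Option.some.injEq]
      constructor
      · rintro ⟨a, ha, rfl⟩
        rwa [← mem_S0_inr m e j y]
      · intro hy
        exact ⟨Sum.inr (j, y), (mem_S0_inr m e j y).mpr hy, rfl⟩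
    rw [hw, hb, e8 j]

section Iso

variable {V V' : Type*} {G : SimpleGraph V} {G' : SimpleGraph V'}

lemma iso_dist_le (φ : G ≃g G') (u v : V) : G'.dist (φ u) (φ v) ≤ G.dist u v := by
  by_cases hr : G.Reachable u v
  · obtain ⟨p, hp⟩ := hr.exists_walk_length_eq_dist
    calc G'.dist (φ u) (φ v) ≤ (p.map φ.toHom).length := SimpleGraph.dist_le _
    _ = G.dist u v := by rw [Walk.length_map]; exact hp
  · rw [SimpleGraph.dist_eq_zero_of_not_reachable hr]
    rw [SimpleGraph.dist_eq_zero_of_not_reachable (by rwa [Iso.reachable_iff])]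

lemma iso_dist (φ : G ≃g G') (u v : V) : G'.dist (φ u) (φ v) = G.dist u v := by
  refine le_antisymm (iso_dist_le φ u v) ?_
  have := iso_dist_le φ.symm (φ u) (φ v)
  simpa using this

variable [DecidableEq V] [DecidableEq V']

lemma iso_resolving (φ : G ≃g G') {W : Finset V} (hW : IsResolvingSet G W) :
    IsResolvingSet G' (W.image φ) := by
  intro u' v' huv
  obtain ⟨w, hwW, hw⟩ := hW (φ.symm u') (φ.symm v') (fun h => huv (by
    simpa using congrArg φ h))
  refine ⟨φ w, Finset.mem_image_of_mem _ hwW, ?_⟩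
  have h1 : G'.dist u' (φ w) = G.dist (φ.symm u') w := by
    conv_lhs => rw [← φ.apply_symm_apply u']
    exact iso_dist φ _ _
  have h2 : G'.dist v' (φ w) = G.dist (φ.symm v') w := by
    conv_lhs => rw [← φ.apply_symm_apply v']
    exact iso_dist φ _ _
  rw [h1, h2]; exact hw

lemma iso_metricDim (φ : G ≃g G') : metricDim G' = metricDim G := by
  unfold metricDim
  congr 1
  ext n
  constructor
  · rintro ⟨W, hW, rfl⟩
    exact ⟨W.image φ.symm, iso_resolving φ.symm hW,
      Finset.card_image_of_injective _ φ.symm.toEquiv.injective⟩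
  · rintro ⟨W, hW, rfl⟩
    exact ⟨W.image φ, iso_resolving φ hW,
      Finset.card_image_of_injective _ φ.toEquiv.injective⟩

lemma iso_image_symm_image (φ : G ≃g G') (W : Finset V) :
    (W.image φ).image φ.symm = W := by
  rw [Finset.image_image]
  have : (⇑φ.symm ∘ ⇑φ) = id := by
    funext x; simp
  rw [this, Finset.image_id]

lemma iso_basis (φ : G ≃g G') {B : Finset V} (hB : IsMetricBasis G B) :
    IsMetricBasis G' (B.image φ) :=
  ⟨iso_resolving φ hB.1, by
    have hinj : Function.Injective (⇑φ) := fun a b h => φ.toEquiv.injective h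
    rw [Finset.card_image_of_injective _ hinj, iso_metricDim φ]
    exact hB.2⟩

lemma iso_uniquelyDimensional (φ : G ≃g G') (h : UniquelyDimensional G) :
    UniquelyDimensional G' := by
  obtain ⟨B, hB, huniq⟩ := h
  refine ⟨B.image φ, iso_basis φ hB, ?_⟩
  intro C hC
  have h1 : IsMetricBasis G (C.image φ.symm) := iso_basis φ.symm hC
  have h2 := huniq _ h1
  calc C = (C.image φ.symm).image φ := (iso_image_symm_image φ.symm C).symm
  _ = B.image φ := by rw [h2]


end Iso

lemma G0_connected (m e : ℕ) : (G0 m e).Connected := coneJoin_connected _ _ _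


lemma metricDim_G0 (m e : ℕ) : metricDim (G0 m e) = 2 * m + 3 * e := by
  apply le_antisymm
  · exact Nat.sInf_le ⟨B0 m e, B0_resolving m e, card_B0 m e⟩
  · refine le_csInf ⟨2 * m + 3 * e, B0 m e, B0_resolving m e, card_B0 m e⟩ ?_
    rintro n ⟨W, hW, rfl⟩
    exact card_lower W hW

lemma G0_unique (m e : ℕ) : UniquelyDimensional (G0 m e) := by
  refine ⟨B0 m e, ⟨B0_resolving m e, by rw [card_B0, metricDim_G0]⟩, ?_⟩
  intro C hC
  exact basis_forced C hC.1 (by rw [hC.2, metricDim_G0])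

end Stmt16

theorem stmt16 (k : ℕ) (hk : 2 ≤ k) :
    ∃ G : SimpleGraph (Fin ((5 * k + 1) / 2 + 1)), G.Connected ∧
      UniquelyKDimensional G k := by
  obtain ⟨m, e, he, hke⟩ : ∃ m e, e ≤ 1 ∧ k = 2 * m + 3 * e := by
    rcases Nat.even_or_odd k with ⟨t, ht⟩ | ⟨t, ht⟩
    · exact ⟨t, 0, by omega, by omega⟩
    · exact ⟨t - 1, 1, by omega, by omega⟩
  have hcard : Fintype.card (Option (Stmt16.V0 m e)) = (5 * k + 1) / 2 + 1 := by
    simp only [Fintype.card_option, Fintype.card_sum, Fintype.card_prod, Fintype.card_fin]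
    omega
  let eqv : Option (Stmt16.V0 m e) ≃ Fin ((5 * k + 1) / 2 + 1) := Fintype.equivFinOfCardEq hcard
  let φ : (Stmt16.G0 m e).comap eqv.symm.toEmbedding ≃g Stmt16.G0 m e :=
    SimpleGraph.Iso.comap eqv.symm (Stmt16.G0 m e)
  refine ⟨(Stmt16.G0 m e).comap eqv.symm.toEmbedding, ?_, ?_, ?_⟩
  · exact (SimpleGraph.Iso.connected_iff φ).mpr (Stmt16.G0_connected m e)
  · exact Stmt16.iso_uniquelyDimensional φ.symm (Stmt16.G0_unique m e)
  · rw [← Stmt16.iso_metricDim φ, Stmt16.metricDim_G0]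
    omega
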